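/- The largest eigenvalue of the adjacency matrix of S_{n,k} (the join of K_k and an independent set of size n−k, with n ≥ k ≥ 1) equals (k−1)/2 + sqrt(k·n − (3k² + 2k − 1)/4). -/

import Mathlib

open Matrix Finset BigOperators

/-- A graph is `k`-degenerate if every nonempty (induced) subgraph has a vertex
of degree at most `k` within it. -/
def SimpleGraph.Degenerate {V : Type*} (k : ℕ) (G : SimpleGraph V) : Prop :=
  ∀ s : Finset V, s.Nonempty → ∃ v ∈ s, {u ∈ (s : Set V) | G.Adj v u}.ncard ≤ k

/-- `SGraph n k`: the join of a complete graph on the first `k` vertices with an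
independent set on the remaining `n - k` vertices (the graph `S_{n,k}`). -/
def SGraph (n k : ℕ) : SimpleGraph (Fin n) where
  Adj u v := u ≠ v ∧ ((u : ℕ) < k ∨ (v : ℕ) < k)
  symm := by refine ⟨?_⟩; intro u v h; exact ⟨h.1.symm, h.2.symm⟩
  loopless := by refine ⟨?_⟩; intro u h; exact h.1 rfl

instance (n k : ℕ) : DecidableRel (SGraph n k).Adj := fun u v => by
  unfold SGraph; infer_instance

/-- The signless Laplacian `Q = D + A` as a real matrix. -/
noncomputable def signlessLaplacian {n : ℕ} (G : SimpleGraph (Fin n)) :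
    Matrix (Fin n) (Fin n) ℝ :=
  letI : DecidableRel G.Adj := Classical.decRel _
  Matrix.diagonal (fun v => (G.degree v : ℝ)) + G.adjMatrix ℝ

theorem signlessLaplacian_isHermitian {n : ℕ} (G : SimpleGraph (Fin n)) :
    (signlessLaplacian G).IsHermitian := by
  letI : DecidableRel G.Adj := Classical.decRel _
  unfold signlessLaplacian
  refine (Matrix.isHermitian_diagonal _).add ?_
  rw [Matrix.IsHermitian, Matrix.conjTranspose_eq_transpose_of_trivial]
  exact SimpleGraph.isSymm_adjMatrix G

theorem adjMatrix_isHermitian {n : ℕ} (G : SimpleGraph (Fin n)) [DecidableRel G.Adj] :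
    (G.adjMatrix ℝ).IsHermitian := by
  rw [Matrix.IsHermitian, Matrix.conjTranspose_eq_transpose_of_trivial]
  exact SimpleGraph.isSymm_adjMatrix G

/-- The largest adjacency eigenvalue `μ(G)`. -/
noncomputable def muIndex {n : ℕ} (G : SimpleGraph (Fin n)) : ℝ :=
  letI : DecidableRel G.Adj := Classical.decRel _
  ⨆ i, (adjMatrix_isHermitian G).eigenvalues i

/-- The largest signless Laplacian eigenvalue `q(G)` (the `Q`-index). -/
noncomputable def qIndex {n : ℕ} (G : SimpleGraph (Fin n)) : ℝ :=
  ⨆ i, (signlessLaplacian_isHermitian G).eigenvalues i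

/-! ### Auxiliary lemmas -/

lemma mulVV {n : ℕ} (x y z w : Fin n → ℝ) :
    vecMulVec x y * vecMulVec z w = (y ⬝ᵥ z) • vecMulVec x w := by
  ext i j
  simp only [vecMulVec_apply, Matrix.mul_apply, Matrix.smul_apply, dotProduct, smul_eq_mul,
    Finset.sum_mul]
  exact Finset.sum_congr rfl fun t _ => by ring

lemma diagMulVV {n : ℕ} (c x y : Fin n → ℝ) :
    diagonal c * vecMulVec x y = vecMulVec (fun i => c i * x i) y := by
  ext i j; simp [vecMulVec_apply, diagonal_mul]; ring

lemma vvMulDiag {n : ℕ} (c x y : Fin n → ℝ) :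
    vecMulVec x y * diagonal c = vecMulVec x (fun j => y j * c j) := by
  ext i j; simp [vecMulVec_apply, mul_diagonal]; ring

lemma vvMulVec {n : ℕ} (x y z : Fin n → ℝ) :
    vecMulVec x y *ᵥ z = (y ⬝ᵥ z) • x := by
  ext i
  simp only [vecMulVec_apply, mulVec, dotProduct, Pi.smul_apply, smul_eq_mul, Finset.sum_mul]
  exact Finset.sum_congr rfl fun t _ => by ring

lemma diagMulVec {n : ℕ} (c x : Fin n → ℝ) :
    diagonal c *ᵥ x = fun i => c i * x i := by
  ext i; rw [Matrix.mulVec_diagonal]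

lemma vvzero {n : ℕ} (x : Fin n → ℝ) : vecMulVec x (0 : Fin n → ℝ) = 0 := by
  ext i j; simp [vecMulVec_apply]

lemma zerovv {n : ℕ} (x : Fin n → ℝ) : vecMulVec (0 : Fin n → ℝ) x = 0 := by
  ext i j; simp [vecMulVec_apply]

lemma exists_eigvec {n : ℕ} {A : Matrix (Fin n) (Fin n) ℝ} (hA : A.IsHermitian) (i : Fin n) :
    ∃ v : Fin n → ℝ, v ≠ 0 ∧ A *ᵥ v = hA.eigenvalues i • v := by
  refine ⟨⇑(hA.eigenvectorBasis i), ?_, ?_⟩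
  · intro h
    have := hA.eigenvectorBasis.orthonormal.ne_zero i
    apply this
    ext j; exact congrFun h j
  · have := hA.mulVec_eigenvectorBasis i
    simpa using this

lemma exists_eig_eq {n : ℕ} {A : Matrix (Fin n) (Fin n) ℝ} (hA : A.IsHermitian) {μ : ℝ}
    {v : Fin n → ℝ} (hv : v ≠ 0) (hAv : A *ᵥ v = μ • v) :
    ∃ i, hA.eigenvalues i = μ := by
  have hdet : (A - μ • 1).det = 0 := by
    by_contra h
    apply hv
    apply Matrix.eq_zero_of_mulVec_eq_zero h
    rw [sub_mulVec, hAv, smul_mulVec, one_mulVec, sub_self]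
  have hsp := hA.spectral_theorem
  set U := (hA.eigenvectorUnitary : Matrix (Fin n) (Fin n) ℝ) with hU
  have hUU : U * star U = 1 :=
    (Matrix.mem_unitaryGroup_iff).mp hA.eigenvectorUnitary.2
  have hid : diagonal (RCLike.ofReal ∘ hA.eigenvalues) = diagonal hA.eigenvalues := rfl
  have hA' : U * diagonal hA.eigenvalues * star U = A := by rw [← hid]; exact (hsp.trans (Unitary.conjStarAlgAut_apply _ _)).symm
  have key : A - μ • 1 = U * (diagonal (fun i => hA.eigenvalues i - μ)) * star U := by
    have h1 : (μ • (1 : Matrix (Fin n) (Fin n) ℝ)) = U * (μ • 1) * star U := by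
      rw [mul_smul_comm, mul_one, smul_mul_assoc, hUU]
    have h2 : diagonal (fun i => hA.eigenvalues i - μ)
        = diagonal hA.eigenvalues - μ • 1 := by
      ext i j
      rcases eq_or_ne i j with rfl | h
      · simp [Matrix.one_apply]
      · simp [Matrix.diagonal_apply_ne _ h, Matrix.one_apply, h]
    rw [h2, mul_sub, sub_mul, hA', ← h1]
  have hdet2 : (A - μ • 1).det = ∏ i, (hA.eigenvalues i - μ) := by
    rw [key, det_mul, det_mul, mul_right_comm, ← det_mul, hUU, det_one, one_mul, det_diagonal]
  rw [hdet2] at hdet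
  obtain ⟨i, _, hi⟩ := Finset.prod_eq_zero_iff.mp hdet
  exact ⟨i, by linarith [sub_eq_zero.mp hi]⟩

def cvec (n k : ℕ) : Fin n → ℝ := fun u => if (u : ℕ) < k then 1 else 0
def dvec (n k : ℕ) : Fin n → ℝ := fun u => if (u : ℕ) < k then 0 else 1

lemma card_lt (n k : ℕ) (hkn : k ≤ n) :
    (univ.filter fun u : Fin n => (u : ℕ) < k).card = k := by
  have himg : Finset.image Fin.val (univ.filter fun u : Fin n => (u : ℕ) < k)
      = Finset.range k := by
    ext m
    simp only [Finset.mem_image, Finset.mem_filter, Finset.mem_univ, true_and,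
      Finset.mem_range]
    constructor
    · rintro ⟨u, hu, rfl⟩; exact hu
    · intro hm; exact ⟨⟨m, lt_of_lt_of_le hm hkn⟩, hm, rfl⟩
  calc (univ.filter fun u : Fin n => (u : ℕ) < k).card
      = (Finset.image Fin.val (univ.filter fun u : Fin n => (u : ℕ) < k)).card :=
        (Finset.card_image_of_injective _ Fin.val_injective).symm
    _ = k := by rw [himg, Finset.card_range]

lemma cdotc (n k : ℕ) (hkn : k ≤ n) : cvec n k ⬝ᵥ cvec n k = (k : ℝ) := by
  unfold cvec dotProduct
  have : ∀ u : Fin n, (if (u:ℕ) < k then (1:ℝ) else 0) * (if (u:ℕ) < k then 1 else 0)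
      = if (u:ℕ) < k then 1 else 0 := fun u => by split <;> simp
  simp only [this, Finset.sum_ite_eq', Finset.sum_boole]
  rw [card_lt n k hkn]

lemma cdotd (n k : ℕ) : cvec n k ⬝ᵥ dvec n k = 0 := by
  unfold cvec dvec dotProduct
  apply Finset.sum_eq_zero; intro u _; beta_reduce; split <;> simp

lemma ddotc (n k : ℕ) : dvec n k ⬝ᵥ cvec n k = 0 := by
  unfold cvec dvec dotProduct
  apply Finset.sum_eq_zero; intro u _; beta_reduce; split <;> simp

lemma ddotd (n k : ℕ) (hkn : k ≤ n) : dvec n k ⬝ᵥ dvec n k = (n : ℝ) - k := by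
  unfold dvec dotProduct
  have : ∀ u : Fin n, (if (u:ℕ) < k then (0:ℝ) else 1) * (if (u:ℕ) < k then 0 else 1)
      = 1 - (if (u:ℕ) < k then 1 else 0) := fun u => by split <;> simp
  simp only [this]
  rw [Finset.sum_sub_distrib, Finset.sum_const, Finset.sum_boole, card_lt n k hkn]
  simp [Fintype.card_fin]

lemma cmulc (n k : ℕ) : (fun i => cvec n k i * cvec n k i) = cvec n k := by
  funext i; unfold cvec; split <;> simp

lemma cmuld (n k : ℕ) : (fun i => cvec n k i * dvec n k i) = 0 := by
  funext i; unfold cvec dvec; beta_reduce; split <;> simp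

lemma dmulc (n k : ℕ) : (fun i => dvec n k i * cvec n k i) = 0 := by
  funext i; unfold cvec dvec; beta_reduce; split <;> simp

lemma adj_eq (n k : ℕ) (inst : DecidableRel (SGraph n k).Adj) :
    (SGraph n k).adjMatrix ℝ = vecMulVec (cvec n k) (cvec n k)
      + vecMulVec (cvec n k) (dvec n k) + vecMulVec (dvec n k) (cvec n k)
      - diagonal (cvec n k) := by
  ext u v
  simp only [SimpleGraph.adjMatrix_apply, Matrix.sub_apply, Matrix.add_apply,
    vecMulVec_apply, cvec, dvec]
  rcases eq_or_ne u v with rfl | huv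
  · by_cases hu : (u : ℕ) < k
    · simp [SGraph, hu, Matrix.diagonal_apply_eq, cvec]
    · simp [SGraph, hu, Matrix.diagonal_apply_eq, cvec]
  · rw [Matrix.diagonal_apply_ne _ huv]
    by_cases hu : (u : ℕ) < k <;> by_cases hv : (v : ℕ) < k <;>
      simp [SGraph, hu, hv, huv]

lemma PQ (n k : ℕ) (hkn : k ≤ n)
    (A : Matrix (Fin n) (Fin n) ℝ)
    (hAeq : A = vecMulVec (cvec n k) (cvec n k) + vecMulVec (cvec n k) (dvec n k)
      + vecMulVec (dvec n k) (cvec n k) - diagonal (cvec n k)) :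
    (A * A + A) * (A * A - ((k:ℝ) - 1) • A - ((k:ℝ) * ((n:ℝ) - (k:ℝ))) • 1) = 0 := by
  have hc := cdotc n k hkn
  have hcd := cdotd n k
  have hdc := ddotc n k
  have hd := ddotd n k hkn
  subst hAeq
  simp only [mul_add, add_mul, mul_sub, sub_mul, smul_mul_assoc, mul_smul_comm,
    mulVV, diagMulVV, vvMulDiag, diagonal_mul_diagonal, cmulc, cmuld, dmulc,
    hc, hcd, hdc, hd, vvzero, zerovv, smul_zero, zero_smul, mul_one, one_mul,
    smul_smul, zero_mul, mul_zero, zero_sub, sub_zero, zero_add, add_zero, neg_neg,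
    smul_neg, neg_smul]
  module

lemma eig_vec (n k : ℕ) (hkn : k ≤ n)
    (A : Matrix (Fin n) (Fin n) ℝ)
    (hAeq : A = vecMulVec (cvec n k) (cvec n k) + vecMulVec (cvec n k) (dvec n k)
      + vecMulVec (dvec n k) (cvec n k) - diagonal (cvec n k))
    (μ : ℝ) (hμ : μ ^ 2 = ((k:ℝ) - 1) * μ + (k:ℝ) * ((n:ℝ) - k)) :
    A *ᵥ (μ • cvec n k + (k:ℝ) • dvec n k) = μ • (μ • cvec n k + (k:ℝ) • dvec n k) := by
  have hc := cdotc n k hkn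
  have hcd := cdotd n k
  have hdc := ddotc n k
  have hd := ddotd n k hkn
  subst hAeq
  simp only [Matrix.add_mulVec, Matrix.sub_mulVec, Matrix.mulVec_add, Matrix.mulVec_smul,
    vvMulVec, diagMulVec, hc, hcd, hdc, hd, cmulc, cmuld]
  match_scalars <;> linarith [hμ]

theorem stmt4 (n k : ℕ) (hk : 1 ≤ k) (hkn : k ≤ n) :
    muIndex (SGraph n k) =
      ((k : ℝ) - 1) / 2 + Real.sqrt (k * n - (3 * (k : ℝ) ^ 2 + 2 * k - 1) / 4) := by
  have hn : 1 ≤ n := le_trans hk hkn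
  haveI : Nonempty (Fin n) := ⟨⟨0, hn⟩⟩
  have hkR : (1:ℝ) ≤ (k:ℝ) := by exact_mod_cast hk
  have hknR : (k:ℝ) ≤ (n:ℝ) := by exact_mod_cast hkn
  -- the target value
  set s := Real.sqrt ((k:ℝ) * n - (3 * (k : ℝ) ^ 2 + 2 * k - 1) / 4) with hs_def
  set μ := ((k : ℝ) - 1) / 2 + s with hμ_def
  have harg : (k:ℝ) * n - (3 * (k : ℝ) ^ 2 + 2 * k - 1) / 4
      = (((k:ℝ) - 1) / 2) ^ 2 + (k:ℝ) * ((n:ℝ) - k) := by ring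
  have harg_nonneg : 0 ≤ (k:ℝ) * n - (3 * (k : ℝ) ^ 2 + 2 * k - 1) / 4 := by
    rw [harg]
    have h1 : 0 ≤ (((k:ℝ) - 1) / 2) ^ 2 := sq_nonneg _
    have h2 : 0 ≤ (k:ℝ) * ((n:ℝ) - k) := by
      apply mul_nonneg (by positivity) (by linarith)
    linarith
  have hs2 : s ^ 2 = (((k:ℝ) - 1) / 2) ^ 2 + (k:ℝ) * ((n:ℝ) - k) := by
    rw [hs_def, Real.sq_sqrt harg_nonneg, harg]
  have hs_nonneg : 0 ≤ s := Real.sqrt_nonneg _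
  have hs_ge : ((k:ℝ) - 1) / 2 ≤ s := by
    rw [hs_def]
    calc ((k:ℝ) - 1) / 2 = Real.sqrt ((((k:ℝ) - 1) / 2) ^ 2) := by
          rw [Real.sqrt_sq (by linarith)]
      _ ≤ _ := by
          apply Real.sqrt_le_sqrt
          rw [harg]
          have : 0 ≤ (k:ℝ) * ((n:ℝ) - k) := mul_nonneg (by positivity) (by linarith)
          linarith
  have hμ_quad : μ ^ 2 = ((k:ℝ) - 1) * μ + (k:ℝ) * ((n:ℝ) - k) := by
    rw [hμ_def]; linear_combination hs2
  have hμ_nonneg : 0 ≤ μ := by rw [hμ_def]; linarith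
  -- set up the matrix
  have hmu_eq : muIndex (SGraph n k)
      = ⨆ i, (adjMatrix_isHermitian (SGraph n k)).eigenvalues i := by
    unfold muIndex
    congr!
  rw [hmu_eq]
  set A := (SGraph n k).adjMatrix ℝ with hA_def
  have hA : A.IsHermitian := adjMatrix_isHermitian _
  have hAeq : A = vecMulVec (cvec n k) (cvec n k) + vecMulVec (cvec n k) (dvec n k)
      + vecMulVec (dvec n k) (cvec n k) - diagonal (cvec n k) := adj_eq n k inferInstance
  -- upper bound for every eigenvalue
  have hbound : ∀ i, hA.eigenvalues i ≤ μ := by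
    intro i
    obtain ⟨v, hv, hAv⟩ := exists_eigvec hA i
    set lam := hA.eigenvalues i with hlam
    have hPQ := PQ n k hkn A hAeq
    have happ : ((A * A + A) * (A * A - ((k:ℝ) - 1) • A - ((k:ℝ) * ((n:ℝ) - (k:ℝ))) • 1)) *ᵥ v
        = ((lam ^ 2 + lam) * (lam ^ 2 - ((k:ℝ) - 1) * lam - (k:ℝ) * ((n:ℝ) - k))) • v := by
      rw [← Matrix.mulVec_mulVec]
      have hAAv : A *ᵥ (A *ᵥ v) = (lam ^ 2) • v := by
        rw [hAv, Matrix.mulVec_smul, hAv, smul_smul]; ring_nf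
      have hinner : (A * A - ((k:ℝ) - 1) • A - ((k:ℝ) * ((n:ℝ) - (k:ℝ))) • 1) *ᵥ v
          = (lam ^ 2 - ((k:ℝ) - 1) * lam - (k:ℝ) * ((n:ℝ) - k)) • v := by
        rw [Matrix.sub_mulVec, Matrix.sub_mulVec, ← Matrix.mulVec_mulVec, hAv,
          Matrix.mulVec_smul, hAv, smul_smul, Matrix.smul_mulVec, hAv,
          Matrix.smul_mulVec, Matrix.one_mulVec]
        match_scalars; ring
      rw [hinner, Matrix.mulVec_smul, Matrix.add_mulVec, ← Matrix.mulVec_mulVec, hAAv, hAv]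
      match_scalars; ring
    rw [hPQ] at happ
    have hzero : ((lam ^ 2 + lam) * (lam ^ 2 - ((k:ℝ) - 1) * lam - (k:ℝ) * ((n:ℝ) - k))) = 0 := by
      by_contra hne
      apply hv
      have := happ.symm
      rw [Matrix.zero_mulVec] at this
      exact (smul_eq_zero.mp this).resolve_left hne
    rcases mul_eq_zero.mp hzero with h1 | h2
    · rcases mul_eq_zero.mp (by linear_combination h1 : lam * (lam + 1) = 0) with h | h
      · rw [h]; exact hμ_nonneg
      · have : lam = -1 := by linarith
        rw [this]; linarith
    · have hfac : (lam - μ) * (lam + μ - ((k:ℝ) - 1)) = 0 := by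
        linear_combination h2 - hμ_quad
      rcases mul_eq_zero.mp hfac with h | h
      · linarith [sub_eq_zero.mp h]
      · have : lam = ((k:ℝ) - 1) - μ := by linarith
        rw [this, hμ_def]; linarith
  -- the value μ is attained
  have hattained : ∃ i, hA.eigenvalues i = μ := by
    rcases lt_or_eq_of_le hkn with hlt | heq
    · -- k < n : use the vector μ • c + k • d
      apply exists_eig_eq hA (v := μ • cvec n k + (k:ℝ) • dvec n k)
      · intro h
        have := congrFun h ⟨k, hlt⟩
        simp only [Pi.add_apply, Pi.smul_apply, Pi.zero_apply, smul_eq_mul, cvec, dvec] at this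
        simp only [lt_irrefl, if_false, if_neg] at this
        have hk0 : (k:ℝ) ≠ 0 := by positivity
        apply hk0
        simpa using this
      · exact eig_vec n k hkn A hAeq μ hμ_quad
    · -- k = n : the graph is complete; eigenvector is the all-ones vector c
      have hd0 : dvec n k = 0 := by
        funext u
        have : (u : ℕ) < k := heq ▸ u.isLt
        simp [dvec, this]
      have hμ_eq : μ = (k:ℝ) - 1 := by
        have hnk : (n:ℝ) = (k:ℝ) := by exact_mod_cast heq.symm
        have : s = ((k:ℝ) - 1) / 2 := by
          rw [hs_def]
          rw [show (k:ℝ) * n - (3 * (k : ℝ) ^ 2 + 2 * k - 1) / 4 = (((k:ℝ)-1)/2)^2 by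
            rw [harg, hnk]; ring]
          exact Real.sqrt_sq (by linarith)
        rw [hμ_def, this]; ring
      apply exists_eig_eq hA (v := cvec n k)
      · intro h
        have := congrFun h ⟨0, hn⟩
        simp only [cvec, Pi.zero_apply] at this
        rw [if_pos (lt_of_lt_of_le Nat.one_pos hk)] at this
        exact one_ne_zero this
      · rw [hAeq, hd0, vvzero, zerovv, add_zero, add_zero]
        rw [Matrix.sub_mulVec, vvMulVec, diagMulVec, cdotc n k hkn]
        have : (fun i => cvec n k i * cvec n k i) = cvec n k := cmulc n k
        rw [this, hμ_eq]
        match_scalars <;> ring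
  -- conclude
  apply le_antisymm
  · exact ciSup_le hbound
  · obtain ⟨i, hi⟩ := hattained
    calc μ = hA.eigenvalues i := hi.symm
      _ ≤ _ := le_ciSup (Set.finite_range _).bddAbove i
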